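/- For every metric space X and every continuous function f : X → ℝ, the set ℓ^∞(f) = {x ∈ X : lip f(x) = ∞} is an F_{σδ}-set in X, i.e., it is a countable intersection of countable unions of closed subsets of X. -/

import Mathlib

open Filter Metric Set Topology

/-- `Lip^r f(x) = (1/r) · sup_{u ∈ B(x,r)} |f(x) − f(u)|`, with the convention
`sup ∅ = 0`, computed in `[0,∞]`. -/
noncomputable def lipR {X : Type*} [MetricSpace X] (f : X → ℝ) (x : X) (r : ℝ) : ENNReal :=
  (⨆ u ∈ Metric.ball x r, ENNReal.ofReal |f x - f u|) / ENNReal.ofReal r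

/-- The little Lipschitz derivative `lip f(x) = liminf_{r→0⁺} Lip^r f(x)`. -/
noncomputable def litLip {X : Type*} [MetricSpace X] (f : X → ℝ) (x : X) : ENNReal :=
  Filter.liminf (lipR f x) (𝓝[>] (0 : ℝ))

/-- For every metric space `X` and every continuous `f : X → ℝ`, the set
`ℓ^∞(f) = {x : lip f(x) = ∞}` is an `F_{σδ}`-set in `X`, i.e. a countable
intersection of countable unions of closed sets. -/
theorem litLip_eq_top_FSigmaDelta {X : Type*} [MetricSpace X] (f : X → ℝ) (hf : Continuous f) :
    ∃ F : ℕ → ℕ → Set X, (∀ n m, IsClosed (F n m)) ∧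
      {x : X | litLip f x = ⊤} = ⋂ n, ⋃ m, F n m := by
  refine ⟨fun n m => {x : X | ∀ r ∈ Set.Ioo (0:ℝ) (1/(m+1)), (n : ENNReal) ≤ lipR f x r},
    ?_, ?_⟩
  · intro n m
    apply isClosed_of_closure_subset
    intro x hx r hr
    obtain ⟨hr0, hrm⟩ := hr
    rw [lipR, ENNReal.le_div_iff_mul_le
      (Or.inl (by simp [ENNReal.ofReal_eq_zero]; linarith)) (Or.inl ENNReal.ofReal_ne_top)]
    have hnr : (n : ENNReal) * ENNReal.ofReal r = ENNReal.ofReal (n * r) := by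
      rw [ENNReal.ofReal_mul (by positivity)]
      simp
    rw [hnr]
    set S := ⨆ u ∈ Metric.ball x r, ENNReal.ofReal |f x - f u| with hS
    have key : ∀ ε ∈ Set.Ioo (0:ℝ) (r/2),
        ENNReal.ofReal (n*r - (2*n+1)*ε) ≤ S := by
      rintro ε ⟨hε0, hεr⟩
      have hU : Metric.ball x ε ∩ f ⁻¹' (Metric.ball (f x) ε) ∈ 𝓝 x :=
        Filter.inter_mem (Metric.ball_mem_nhds x hε0)
          (hf.continuousAt (Metric.ball_mem_nhds (f x) hε0))
      obtain ⟨x', ⟨hx'b, hx'f⟩, hx'F⟩ := mem_closure_iff_nhds.mp hx _ hU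
      set r' := r - 2*ε with hr'
      have hr'0 : 0 < r' := by simp [hr']; linarith
      have hr'm : r' < 1/(m+1) := by rw [hr']; linarith
      have h1 := hx'F r' ⟨hr'0, hr'm⟩
      rw [lipR, ENNReal.le_div_iff_mul_le
        (Or.inl (by simp [ENNReal.ofReal_eq_zero]; linarith)) (Or.inl ENNReal.ofReal_ne_top)] at h1
      have h2 : ENNReal.ofReal (n * r') ≤
          ⨆ u ∈ Metric.ball x' r', ENNReal.ofReal |f x' - f u| := by
        rw [ENNReal.ofReal_mul (by positivity)]
        simpa using h1
      have hfx : |f x' - f x| < ε := by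
        have := hx'f
        simpa [Real.dist_eq] using this
      have hdx : dist x' x < ε := hx'b
      have h3 : (⨆ u ∈ Metric.ball x' r', ENNReal.ofReal |f x' - f u|) ≤
          S + ENNReal.ofReal ε := by
        refine iSup₂_le fun u hu => ?_
        have hub : u ∈ Metric.ball x r := by
          have : dist u x' < r' := hu
          have : dist u x ≤ dist u x' + dist x' x := dist_triangle u x' x
          simp only [Metric.mem_ball]
          linarith [Metric.mem_ball.mp hu]
        calc ENNReal.ofReal |f x' - f u|
            ≤ ENNReal.ofReal (|f x - f u| + ε) := by
              apply ENNReal.ofReal_le_ofReal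
              have := abs_sub_le (f x') (f x) (f u)
              have h5 : |f x' - f x| ≤ ε := hfx.le
              linarith
          _ ≤ ENNReal.ofReal |f x - f u| + ENNReal.ofReal ε := ENNReal.ofReal_add_le
          _ ≤ S + ENNReal.ofReal ε := by
              gcongr
              exact le_iSup₂ (f := fun u _ => ENNReal.ofReal |f x - f u|) u hub
      have h4 : ENNReal.ofReal (n * r' - ε) ≤ S := by
        rw [ENNReal.ofReal_sub _ hε0.le]
        exact tsub_le_iff_right.mpr (h2.trans h3)
      refine le_trans (ENNReal.ofReal_le_ofReal ?_) h4
      nlinarith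
    have htend : Tendsto (fun ε : ℝ => ENNReal.ofReal (n*r - (2*n+1)*ε)) (𝓝[>] 0)
        (𝓝 (ENNReal.ofReal (n*r))) := by
      have h6 : Tendsto (fun ε : ℝ => n*r - (2*n+1)*ε) (𝓝 0) (𝓝 (n*r)) := by
        have : Continuous (fun ε : ℝ => (n:ℝ)*r - (2*n+1)*ε) := by continuity
        simpa using this.tendsto 0
      exact (ENNReal.continuous_ofReal.tendsto _).comp (h6.mono_left nhdsWithin_le_nhds)
    refine le_of_tendsto htend ?_
    filter_upwards [Ioo_mem_nhdsGT_of_mem (left_mem_Ico.mpr (by linarith : (0:ℝ) < r/2))]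
      with ε hε using key ε hε
  · ext x
    simp only [Set.mem_setOf_eq, Set.mem_iInter, Set.mem_iUnion]
    constructor
    · intro h n
      have h1 : (n : ENNReal) < litLip f x := h ▸ ENNReal.natCast_lt_top n
      have h2 : ∀ᶠ r in 𝓝[>] (0:ℝ), (n : ENNReal) < lipR f x r :=
        Filter.eventually_lt_of_lt_liminf h1
      rw [Filter.eventually_iff, mem_nhdsGT_iff_exists_Ioo_subset] at h2
      obtain ⟨u, hu, hsub⟩ := h2
      obtain ⟨m, hm⟩ := exists_nat_one_div_lt (Set.mem_Ioi.mp hu)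
      exact ⟨m, fun r hr => (hsub ⟨hr.1, hr.2.trans hm⟩).le⟩
    · intro h
      by_contra hne
      obtain ⟨n, hn⟩ := ENNReal.exists_nat_gt hne
      obtain ⟨m, hm⟩ := h n
      have hmem : Set.Ioo (0:ℝ) (1/(m+1)) ∈ 𝓝[>] (0:ℝ) :=
        Ioo_mem_nhdsGT_of_mem (left_mem_Ico.mpr (by positivity))
      have h7 : (n : ENNReal) ≤ litLip f x :=
        Filter.le_liminf_of_le (by isBoundedDefault)
          (Filter.eventually_of_mem hmem fun r hr => hm r hr)
      exact absurd h7 (not_le.mpr hn)
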